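/- Let V be a real vector space, N : V → [0,∞) a seminorm, g ∈ V, and define Q⁺(f) := lim_{ε↓0} (N(g+εf)² − N(g)²)/(2ε) and Q⁻(f) := lim_{ε↑0} (N(g+εf)² − N(g)²)/(2ε). Then |Q^±(f₁) − Q^±(f₂)| ≤ N(f₁−f₂)·N(g) for all f₁, f₂ ∈ V. -/

import Mathlib

open Filter Set

lemma stmt9_aux {V : Type*} [AddCommGroup V] [Module ℝ V] (N : Seminorm ℝ V) (g f₁ f₂ : V)
    (l : Filter ℝ) [l.NeBot] (hl : l ≤ nhds 0) (hne : ∀ᶠ ε in l, ε ≠ 0) (Q₁ Q₂ : ℝ)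
    (h1 : Tendsto (fun ε : ℝ => ((N (g + ε • f₁)) ^ 2 - (N g) ^ 2) / (2 * ε)) l (nhds Q₁))
    (h2 : Tendsto (fun ε : ℝ => ((N (g + ε • f₂)) ^ 2 - (N g) ^ 2) / (2 * ε)) l (nhds Q₂)) :
    |Q₁ - Q₂| ≤ N (f₁ - f₂) * N g := by
  have hN : ∀ f : V, Tendsto (fun ε : ℝ => (N (g + ε • f) : ℝ)) l (nhds (N g)) := by
    intro f
    have h0 : Tendsto (fun ε : ℝ => (N (g + ε • f) : ℝ) - N g) l (nhds 0) := by
      refine squeeze_zero_norm (a := fun ε : ℝ => |ε| * N f) (fun ε => ?_) ?_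
      · calc ‖(N (g + ε • f) : ℝ) - N g‖ ≤ N (g + ε • f - g) := N.norm_sub_map_le_sub _ _
          _ = |ε| * N f := by rw [add_sub_cancel_left, map_smul_eq_mul]; rfl
      · have h : Tendsto (fun ε : ℝ => |ε| * N f) (nhds 0) (nhds (|(0:ℝ)| * N f)) :=
          Tendsto.mul (continuous_abs.tendsto 0) tendsto_const_nhds
        simpa using h.comp (tendsto_id.mono_left hl)
    simpa using h0.add_const (N g : ℝ)
  have hbound : Tendsto (fun ε : ℝ => (N (f₁ - f₂) : ℝ) * ((N (g + ε • f₁) + N (g + ε • f₂)) / 2))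
      l (nhds (N (f₁ - f₂) * N g)) := by
    have h := (((hN f₁).add (hN f₂)).div_const 2).const_mul (N (f₁ - f₂) : ℝ)
    have h2 : (N (f₁ - f₂) : ℝ) * ((N g + N g) / 2) = N (f₁ - f₂) * N g := by ring
    rwa [h2] at h
  have habs : Tendsto (fun ε : ℝ => |((N (g + ε • f₁)) ^ 2 - (N g) ^ 2) / (2 * ε)
      - ((N (g + ε • f₂)) ^ 2 - (N g) ^ 2) / (2 * ε)|) l (nhds |Q₁ - Q₂|) :=
    (h1.sub h2).abs
  refine le_of_tendsto_of_tendsto habs hbound ?_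
  filter_upwards [hne] with ε hε
  have hAB : |(N (g + ε • f₁) : ℝ) - N (g + ε • f₂)| ≤ |ε| * N (f₁ - f₂) := by
    calc |(N (g + ε • f₁) : ℝ) - N (g + ε • f₂)| ≤ N (g + ε • f₁ - (g + ε • f₂)) :=
          abs_sub_map_le_sub N _ _
      _ = |ε| * N (f₁ - f₂) := by
          rw [show g + ε • f₁ - (g + ε • f₂) = ε • (f₁ - f₂) by rw [smul_sub]; abel,
            map_smul_eq_mul]; rfl
  have key : |((N (g + ε • f₁)) ^ 2 - (N g) ^ 2) / (2 * ε)
      - ((N (g + ε • f₂)) ^ 2 - (N g) ^ 2) / (2 * ε)|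
      ≤ N (f₁ - f₂) * ((N (g + ε • f₁) + N (g + ε • f₂)) / 2) := by
    set A := (N (g + ε • f₁) : ℝ)
    set B := (N (g + ε • f₂) : ℝ)
    have hA : 0 ≤ A := apply_nonneg N _
    have hB : 0 ≤ B := apply_nonneg N _
    have hεpos : 0 < |ε| := abs_pos.mpr hε
    have : (A ^ 2 - (N g) ^ 2) / (2 * ε) - (B ^ 2 - (N g) ^ 2) / (2 * ε)
        = (A ^ 2 - B ^ 2) / (2 * ε) := by field_simp; ring
    rw [this, abs_div, abs_mul]
    rw [div_le_iff₀ (by positivity)]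
    have : |A ^ 2 - B ^ 2| = |A - B| * (A + B) := by
      rw [show A ^ 2 - B ^ 2 = (A - B) * (A + B) by ring, abs_mul,
        abs_of_nonneg (add_nonneg hA hB)]
    rw [this]
    calc |A - B| * (A + B) ≤ (|ε| * N (f₁ - f₂)) * (A + B) :=
          mul_le_mul_of_nonneg_right hAB (by linarith)
      _ = N (f₁ - f₂) * ((A + B) / 2) * (|2| * |ε|) := by
          rw [abs_two]; ring
  exact key

/-- The maps `f ↦ D⁺f(∇g)` and `f ↦ D⁻f(∇g)` defined as one-sided derivatives of
`ε ↦ ½N(g+εf)²` are 1-Lipschitz: `|Q^±(f₁) − Q^±(f₂)| ≤ N(f₁−f₂) N(g)`. -/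
theorem stmt9 {V : Type*} [AddCommGroup V] [Module ℝ V] (N : Seminorm ℝ V) (g : V)
    (Qp Qm : V → ℝ)
    (hQp : ∀ f : V, Tendsto (fun ε : ℝ => ((N (g + ε • f)) ^ 2 - (N g) ^ 2) / (2 * ε))
      (nhdsWithin 0 (Set.Ioi 0)) (nhds (Qp f)))
    (hQm : ∀ f : V, Tendsto (fun ε : ℝ => ((N (g + ε • f)) ^ 2 - (N g) ^ 2) / (2 * ε))
      (nhdsWithin 0 (Set.Iio 0)) (nhds (Qm f))) :
    ∀ f₁ f₂ : V, |Qp f₁ - Qp f₂| ≤ N (f₁ - f₂) * N g ∧ |Qm f₁ - Qm f₂| ≤ N (f₁ - f₂) * N g := by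
  intro f₁ f₂
  constructor
  · exact stmt9_aux N g f₁ f₂ (nhdsWithin (0:ℝ) (Set.Ioi 0)) nhdsWithin_le_nhds
      (eventually_nhdsWithin_of_forall fun x hx => ne_of_gt hx) _ _ (hQp f₁) (hQp f₂)
  · exact stmt9_aux N g f₁ f₂ (nhdsWithin (0:ℝ) (Set.Iio 0)) nhdsWithin_le_nhds
      (eventually_nhdsWithin_of_forall fun x hx => ne_of_lt hx) _ _ (hQm f₁) (hQm f₂)
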